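/- For every natural number n, the number of isomorphism classes of C2-pairs on the set {1,…,n} equals the n-th Catalan number C_n = (1/(n+1))·binom(2n,n). -/

import Mathlib

open scoped Classical

namespace FishburnPaper

universe u

/-- A strict partial order: irreflexive and transitive. -/
def StrictOrd {X : Type u} (Q : X → X → Prop) : Prop :=
  (∀ x, ¬ Q x x) ∧ ∀ ⦃x y z⦄, Q x y → Q y z → Q x z

/-- `x` and `y` are comparable by the relation `Q`. -/
def Cmp {X : Type u} (Q : X → X → Prop) (x y : X) : Prop := Q x y ∨ Q y x

/-- Exactly one of the three propositions holds. -/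
def ExactlyOne3 (a b c : Prop) : Prop :=
  (a ∨ b ∨ c) ∧ ¬ (a ∧ b) ∧ ¬ (a ∧ c) ∧ ¬ (b ∧ c)

/-- A C1-pair: `S` and `R` are strict partial orders, any two distinct elements are
comparable by exactly one of them, and `x S y → y R z → x R z` for distinct `x,y,z`. -/
def IsC1Pair {X : Type u} (S R : X → X → Prop) : Prop :=
  StrictOrd S ∧ StrictOrd R ∧
  (∀ x y : X, x ≠ y → Xor' (Cmp S x y) (Cmp R x y)) ∧
  (∀ x y z : X, x ≠ y → y ≠ z → x ≠ z → S x y → R y z → R x z)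

/-- A C2-pair: `R` and `T ∪ R` are strict partial orders, any two distinct elements are
comparable by exactly one of `T` and `R`, and the two three-element patterns are forbidden. -/
def IsC2Pair {X : Type u} (T R : X → X → Prop) : Prop :=
  StrictOrd R ∧ StrictOrd (fun x y => T x y ∨ R x y) ∧
  (∀ x y : X, x ≠ y → Xor' (Cmp T x y) (Cmp R x y)) ∧
  (¬ ∃ x y z : X, x ≠ y ∧ y ≠ z ∧ x ≠ z ∧ T x y ∧ T x z ∧ R y z) ∧
  (¬ ∃ x y z : X, x ≠ y ∧ y ≠ z ∧ x ≠ z ∧ T y x ∧ T z x ∧ R y z)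

/-- A Fishburn triple: `S`, `R` and `T ∪ R` are strict partial orders, any two distinct
elements are comparable by exactly one of `T`, `S`, `R`, the axioms C1c, C1c* hold,
and the two three-element patterns of axiom C2c are forbidden. -/
def IsFishburnTriple {X : Type u} (T S R : X → X → Prop) : Prop :=
  StrictOrd S ∧ StrictOrd R ∧ StrictOrd (fun x y => T x y ∨ R x y) ∧
  (∀ x y : X, x ≠ y → ExactlyOne3 (Cmp T x y) (Cmp S x y) (Cmp R x y)) ∧
  (∀ x y z : X, x ≠ y → y ≠ z → x ≠ z → S x y → R y z → R x z) ∧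
  (∀ x y z : X, x ≠ y → y ≠ z → x ≠ z → S x y → R z y → R z x) ∧
  (¬ ∃ x y z : X, x ≠ y ∧ y ≠ z ∧ x ≠ z ∧ T x y ∧ T x z ∧ R y z) ∧
  (¬ ∃ x y z : X, x ≠ y ∧ y ≠ z ∧ x ≠ z ∧ T y x ∧ T z x ∧ R z y)

/-- `R` contains the poset 2+2: four distinct elements `a,b,c,d` with `a R b`, `c R d`,
and no other ordered pair among them in `R`. -/
def Contains22 {X : Type u} (R : X → X → Prop) : Prop :=
  ∃ a b c d : X, a ≠ b ∧ a ≠ c ∧ a ≠ d ∧ b ≠ c ∧ b ≠ d ∧ c ≠ d ∧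
    R a b ∧ R c d ∧
    ¬ R b a ∧ ¬ R a c ∧ ¬ R c a ∧ ¬ R a d ∧ ¬ R d a ∧
    ¬ R b c ∧ ¬ R c b ∧ ¬ R b d ∧ ¬ R d b ∧ ¬ R d c

/-- `R` contains the poset 3+1: four distinct elements `a,b,c,d` with `a R b`, `b R c`,
`a R c`, and `d` incomparable to each of `a,b,c`. -/
def Contains31 {X : Type u} (R : X → X → Prop) : Prop :=
  ∃ a b c d : X, a ≠ b ∧ a ≠ c ∧ a ≠ d ∧ b ≠ c ∧ b ≠ d ∧ c ≠ d ∧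
    R a b ∧ R b c ∧ R a c ∧ ¬ Cmp R d a ∧ ¬ Cmp R d b ∧ ¬ Cmp R d c

/-- `R` contains the poset N: four distinct elements `u,v,x,y` with `u R v`, `u R y`,
`x R v`, and no other ordered pair among them in `R`. -/
def ContainsN {X : Type u} (R : X → X → Prop) : Prop :=
  ∃ u v x y : X, u ≠ v ∧ u ≠ x ∧ u ≠ y ∧ v ≠ x ∧ v ≠ y ∧ x ≠ y ∧
    R u v ∧ R u y ∧ R x v ∧
    ¬ R v u ∧ ¬ R u x ∧ ¬ R x u ∧ ¬ R y u ∧ ¬ R v x ∧ ¬ R v y ∧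
    ¬ R y v ∧ ¬ R x y ∧ ¬ R y x

/-- Number of `Q`-maximal elements. -/
noncomputable def mmax {X : Type u} (Q : X → X → Prop) : ℕ :=
  Nat.card {x : X // ∀ y : X, ¬ Q x y}

/-- A Fishburn matrix: upper triangular (rows numbered top to bottom), every row and
every column contains a nonzero entry. -/
def IsFishburn {m : ℕ} (M : Fin m → Fin m → ℕ) : Prop :=
  (∀ i j : Fin m, j < i → M i j = 0) ∧
  (∀ i : Fin m, ∃ j : Fin m, M i j ≠ 0) ∧
  (∀ j : Fin m, ∃ i : Fin m, M i j ≠ 0)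

/-- A cell `(i, j)` of an `m × m` matrix. -/
abbrev Cell (m : ℕ) := Fin m × Fin m

/-- Cell `c = (i,j)` is smaller than `c' = (i',j')` if `j < i'`. -/
def Smaller {m : ℕ} (c c' : Cell m) : Prop := c.2 < c'.1

/-- Cells `c` and `c'` are incomparable: neither is smaller than the other. -/
def Incomp {m : ℕ} (c c' : Cell m) : Prop := ¬ Smaller c c' ∧ ¬ Smaller c' c

/-- `c = (i,j)` is strictly SW of `c' = (i',j')` : `i > i'` and `j < j'`. -/
def StrictSW {m : ℕ} (c c' : Cell m) : Prop := c'.1 < c.1 ∧ c.2 < c'.2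

/-- `c = (i,j)` is weakly SW of `c' = (i',j')` : `c ≠ c'`, `i ≥ i'` and `j ≤ j'`. -/
def WeakSW {m : ℕ} (c c' : Cell m) : Prop := c ≠ c' ∧ c'.1 ≤ c.1 ∧ c.2 ≤ c'.2

/-- `c = (i,j)` is strictly NW of `c' = (i',j')` : incomparable, `i < i'` and `j < j'`. -/
def StrictNW {m : ℕ} (c c' : Cell m) : Prop := Incomp c c' ∧ c.1 < c'.1 ∧ c.2 < c'.2

/-- `c = (i,j)` is weakly NW of `c' = (i',j')` : `c ≠ c'`, incomparable, `i ≤ i'`, `j ≤ j'`. -/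
def WeakNW {m : ℕ} (c c' : Cell m) : Prop := c ≠ c' ∧ Incomp c c' ∧ c.1 ≤ c'.1 ∧ c.2 ≤ c'.2

/-- A nonzero cell of `M` (on or above the diagonal). -/
def NonzeroCell {m : ℕ} (M : Fin m → Fin m → ℕ) (c : Cell m) : Prop :=
  c.1 ≤ c.2 ∧ M c.1 c.2 ≠ 0

/-- The ground set `X_M = {(i,j,a) : i ≤ j, a < M i j}` of the poset induced by `M`. -/
abbrev XM {m : ℕ} (M : Fin m → Fin m → ℕ) : Type :=
  {x : Fin m × Fin m × ℕ // x.1 ≤ x.2.1 ∧ x.2.2 < M x.1 x.2.1}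

/-- The cell representing an element of `X_M`. -/
def cellOf {m : ℕ} {M : Fin m → Fin m → ℕ} (x : XM M) : Cell m := (x.1.1, x.1.2.1)

/-- The interval order induced by `M`: `(i,j,a) R (i',j',a')` iff `j < i'`. -/
def Rind {m : ℕ} {M : Fin m → Fin m → ℕ} (x y : XM M) : Prop := x.1.2.1 < y.1.1

/-- A nonzero cell with no other nonzero cell weakly NE of it. -/
def IsWNECell {m : ℕ} (M : Fin m → Fin m → ℕ) (c : Cell m) : Prop :=
  NonzeroCell M c ∧ ∀ c' : Cell m, NonzeroCell M c' → c' ≠ c → ¬ WeakSW c c'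

/-- A nonzero cell with no other nonzero cell strictly NE of it. -/
def IsSNECell {m : ℕ} (M : Fin m → Fin m → ℕ) (c : Cell m) : Prop :=
  NonzeroCell M c ∧ ∀ c' : Cell m, NonzeroCell M c' → c' ≠ c → ¬ StrictSW c c'

/-- A nonzero cell with no other nonzero cell strictly SE of it. -/
def IsSSECell {m : ℕ} (M : Fin m → Fin m → ℕ) (c : Cell m) : Prop :=
  NonzeroCell M c ∧ ∀ c' : Cell m, NonzeroCell M c' → c' ≠ c → ¬ StrictNW c c'

/-- A nonzero cell with no other nonzero cell weakly SE of it. -/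
def IsWSECell {m : ℕ} (M : Fin m → Fin m → ℕ) (c : Cell m) : Prop :=
  NonzeroCell M c ∧ ∀ c' : Cell m, NonzeroCell M c' → c' ≠ c → ¬ WeakNW c c'

/-- The number of wNE-cells of `M`. -/
noncomputable def wNEcount {m : ℕ} (M : Fin m → Fin m → ℕ) : ℕ :=
  Nat.card {c : Cell m // IsWNECell M c}

/-- The number of wSE-cells of `M`. -/
noncomputable def wSEcount {m : ℕ} (M : Fin m → Fin m → ℕ) : ℕ :=
  Nat.card {c : Cell m // IsWSECell M c}

/-- The total weight of the sNE-cells of `M`. -/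
noncomputable def sNEweight {m : ℕ} (M : Fin m → Fin m → ℕ) : ℕ :=
  ∑ c : Cell m, if IsSNECell M c then M c.1 c.2 else 0

/-- The total weight of the sSE-cells of `M`. -/
noncomputable def sSEweight {m : ℕ} (M : Fin m → Fin m → ℕ) : ℕ :=
  ∑ c : Cell m, if IsSSECell M c then M c.1 c.2 else 0

/-- The weight of `M`: the sum of all entries. -/
def weight {m : ℕ} (M : Fin m → Fin m → ℕ) : ℕ := ∑ c : Cell m, M c.1 c.2

/-- The weight of the last column of `M`. -/
def lastColWeight {m : ℕ} (M : Fin m → Fin m → ℕ) : ℕ :=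
  ∑ c : Cell m, if c.2.val = m - 1 then M c.1 c.2 else 0

/-- The total weight of the columns of `M` preceding the last one. -/
def prevColWeight {m : ℕ} (M : Fin m → Fin m → ℕ) : ℕ :=
  ∑ c : Cell m, if c.2.val < m - 1 then M c.1 c.2 else 0

/-- The first component of the F1-triple of `M`: `x T₁ y` iff `c_x` strictly NW of `c_y`. -/
def T1 {m : ℕ} {M : Fin m → Fin m → ℕ} (x y : XM M) : Prop :=
  StrictNW (cellOf x) (cellOf y)

/-- The second component of the F1-triple of `M`: `x S₁ y` iff `c_x` weakly SW of `c_y`,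
or `c_x = c_y` and the third coordinate of `x` is smaller than that of `y`. -/
def S1 {m : ℕ} {M : Fin m → Fin m → ℕ} (x y : XM M) : Prop :=
  WeakSW (cellOf x) (cellOf y) ∨ (cellOf x = cellOf y ∧ x.1.2.2 < y.1.2.2)

/-- The first component of the F2-triple of `M`: `x T₂ y` iff `c_x` weakly NW of `c_y`,
or `c_x = c_y` and the third coordinate of `x` is smaller than that of `y`. -/
def T2 {m : ℕ} {M : Fin m → Fin m → ℕ} (x y : XM M) : Prop :=
  WeakNW (cellOf x) (cellOf y) ∨ (cellOf x = cellOf y ∧ x.1.2.2 < y.1.2.2)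

/-- The second component of the F2-triple of `M`: `x S₂ y` iff `c_x` strictly SW of `c_y`. -/
def S2 {m : ℕ} {M : Fin m → Fin m → ℕ} (x y : XM M) : Prop :=
  StrictSW (cellOf x) (cellOf y)

/-- C1-pairs on `Fin n`. -/
abbrev C1PairsOn (n : ℕ) :=
  {p : (Fin n → Fin n → Prop) × (Fin n → Fin n → Prop) // IsC1Pair p.1 p.2}

/-- C2-pairs on `Fin n`. -/
abbrev C2PairsOn (n : ℕ) :=
  {p : (Fin n → Fin n → Prop) × (Fin n → Fin n → Prop) // IsC2Pair p.1 p.2}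

/-- Isomorphism of C1-pairs. -/
def isoC1 {n : ℕ} (p q : C1PairsOn n) : Prop :=
  ∃ f : Fin n ≃ Fin n, ∀ x y : Fin n,
    (p.1.1 x y ↔ q.1.1 (f x) (f y)) ∧ (p.1.2 x y ↔ q.1.2 (f x) (f y))

/-- Isomorphism of C2-pairs. -/
def isoC2 {n : ℕ} (p q : C2PairsOn n) : Prop :=
  ∃ f : Fin n ≃ Fin n, ∀ x y : Fin n,
    (p.1.1 x y ↔ q.1.1 (f x) (f y)) ∧ (p.1.2 x y ↔ q.1.2 (f x) (f y))

/-- Fishburn matrices of weight `n` (of arbitrary size `m ≥ 1`). -/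
abbrev FishburnW (n : ℕ) :=
  {p : Σ m : ℕ, Fin m → Fin m → ℕ // 0 < p.1 ∧ IsFishburn p.2 ∧ weight p.2 = n}





/-- Staircase functions. -/
def G (n : ℕ) := {f : ℕ → ℕ // Monotone f ∧ (∀ j, f j ≤ j) ∧ ∀ j, n ≤ j → f j = j}

instance (n : ℕ) : Finite (G n) := by
  have : Function.Injective (fun f : G n => fun j : Fin n => (⟨f.1 j, lt_of_le_of_lt (f.2.2.1 j) j.isLt⟩ : Fin n)) := by
    intro f g h
    apply Subtype.ext; funext j
    by_cases hj : j < n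
    · exact congrArg Fin.val (congrFun h ⟨j, hj⟩)
    · rw [f.2.2.2 j (le_of_not_gt hj), g.2.2.2 j (le_of_not_gt hj)]
  exact Finite.of_injective _ this

noncomputable instance (n : ℕ) : Fintype (G n) := Fintype.ofFinite _

def p1 (g : ℕ → ℕ) (i : ℕ) : ℕ → ℕ := fun t => if t < i then g (t+1) else t
def p2 (g : ℕ → ℕ) (i k : ℕ) : ℕ → ℕ := fun t => if t < k then g (t+i+1) - (i+1) else t
def comp0 (i : ℕ) (f1 f2 : ℕ → ℕ) : ℕ → ℕ :=
  fun j => if j ≤ i then (if j = 0 then 0 else f1 (j-1)) else (i+1) + f2 (j - (i+1))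

noncomputable def idx {n : ℕ} (f : G (n+1)) : ℕ :=
  Nat.find (⟨n, f.2.2.2 (n+1) le_rfl⟩ : ∃ j, f.1 (j+1) = j+1)

lemma idx_le {n : ℕ} (f : G (n+1)) : idx f ≤ n :=
  Nat.find_le (f.2.2.2 (n+1) le_rfl)

lemma idx_spec {n : ℕ} (f : G (n+1)) : f.1 (idx f + 1) = idx f + 1 :=
  Nat.find_spec (⟨n, f.2.2.2 (n+1) le_rfl⟩ : ∃ j, f.1 (j+1) = j+1)

lemma idx_min {n : ℕ} (f : G (n+1)) {t : ℕ} (h : t < idx f) : f.1 (t+1) ≤ t := by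
  have := Nat.find_min (⟨n, f.2.2.2 (n+1) le_rfl⟩ : ∃ j, f.1 (j+1) = j+1) h
  have h2 := f.2.2.1 (t+1)
  omega

noncomputable def decompFun {n : ℕ} (f : G (n+1)) :
    Σ i : Fin (n+1), G i × G (n - i) := by
  refine ⟨⟨idx f, by have := idx_le f; omega⟩,
    ⟨p1 f.1 (idx f), ?_, ?_, ?_⟩, ⟨p2 f.1 (idx f) (n - idx f), ?_, ?_, ?_⟩⟩
  · intro s t hst
    unfold p1
    by_cases hs : s < idx f
    · by_cases ht : t < idx f
      · simp only [if_pos hs, if_pos ht]; exact f.2.1 (by omega)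
      · simp only [if_pos hs, if_neg ht]
        have := idx_min f hs; omega
    · have ht : ¬ t < idx f := by omega
      simp only [if_neg hs, if_neg ht]; exact hst
  · intro t
    unfold p1
    by_cases hs : t < idx f
    · simp only [if_pos hs]; exact idx_min f hs
    · simp [if_neg hs]
  · intro t ht
    simp only [Fin.val_mk] at ht
    unfold p1; rw [if_neg (by omega)]
  · intro s t hst
    unfold p2
    by_cases hs : s < n - idx f
    · by_cases ht : t < n - idx f
      · simp only [if_pos hs, if_pos ht]
        exact Nat.sub_le_sub_right (f.2.1 (by omega)) _
      · simp only [if_pos hs, if_neg ht]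
        have := f.2.2.1 (s + idx f + 1); omega
    · have ht : ¬ t < n - idx f := by omega
      simp only [if_neg hs, if_neg ht]; exact hst
  · intro t
    unfold p2
    by_cases hs : t < n - idx f
    · simp only [if_pos hs]
      have := f.2.2.1 (t + idx f + 1); omega
    · simp [if_neg hs]
  · intro t ht
    simp only [Fin.val_mk] at ht
    unfold p2; rw [if_neg (by omega)]

noncomputable def compFun {n : ℕ} (x : Σ i : Fin (n+1), G i × G (n - i)) : G (n+1) := by
  refine ⟨comp0 x.1.1 x.2.1.1 x.2.2.1, ?_, ?_, ?_⟩
  · obtain ⟨⟨i, hi⟩, f1, f2⟩ := x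
    dsimp only
    intro s t hst
    unfold comp0
    by_cases hs : s ≤ i
    · by_cases ht : t ≤ i
      · simp only [if_pos hs, if_pos ht]
        by_cases hs0 : s = 0
        · simp [hs0]
        · rw [if_neg hs0, if_neg (by omega)]
          exact f1.2.1 (by omega)
      · simp only [if_pos hs, if_neg ht]
        have h1 : (if s = 0 then 0 else f1.1 (s-1)) ≤ s := by
          by_cases hs0 : s = 0
          · simp [hs0]
          · rw [if_neg hs0]; have := f1.2.2.1 (s-1); omega
        omega
    · have ht : ¬ t ≤ i := by omega
      simp only [if_neg hs, if_neg ht]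
      have := f2.2.1 (show s - (i+1) ≤ t - (i+1) by omega)
      omega
  · obtain ⟨⟨i, hi⟩, f1, f2⟩ := x
    dsimp only
    intro j
    unfold comp0
    by_cases hj : j ≤ i
    · by_cases hj0 : j = 0
      · simp [hj0]
      · rw [if_pos hj, if_neg hj0]; have := f1.2.2.1 (j-1); omega
    · rw [if_neg hj]; have := f2.2.2.1 (j - (i+1)); omega
  · obtain ⟨⟨i, hi⟩, f1, f2⟩ := x
    dsimp only
    intro j hj
    unfold comp0
    rw [if_neg (by omega)]
    have := f2.2.2.2 (j - (i+1)) (by simp only [Fin.val_mk]; omega)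
    omega

lemma sigma_ext {n : ℕ} {i j : Fin (n+1)} {a : G i.1 × G (n-i.1)} {b : G j.1 × G (n-j.1)}
    (h : i = j) (h1 : a.1.1 = b.1.1) (h2 : a.2.1 = b.2.1) :
    (⟨i, a⟩ : Σ k : Fin (n+1), G k.1 × G (n-k.1)) = ⟨j, b⟩ := by
  subst h
  exact congrArg _ (Prod.ext (Subtype.ext h1) (Subtype.ext h2))

lemma idx_comp {n : ℕ} (x : Σ i : Fin (n+1), G i × G (n - i)) : idx (compFun x) = x.1.1 := by
  obtain ⟨⟨i, hi⟩, f1, f2⟩ := x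
  dsimp only
  have hv : (compFun (⟨⟨i, hi⟩, f1, f2⟩ : Σ i : Fin (n+1), G i × G (n - i))).1 = comp0 i f1.1 f2.1 := rfl
  rw [idx, Nat.find_eq_iff]
  constructor
  · rw [hv]; unfold comp0
    rw [if_neg (by omega)]
    have h0 : f2.1 ((i+1) - (i+1)) = 0 := by have := f2.2.2.1 (i+1-(i+1)); omega
    omega
  · intro t ht
    rw [hv]; unfold comp0
    rw [if_pos (by omega), if_neg (by omega)]
    have := f1.2.2.1 (t+1-1)
    omega

noncomputable def decompEquiv (n : ℕ) : G (n+1) ≃ Σ i : Fin (n+1), G i × G (n - i) where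
  toFun := decompFun
  invFun := compFun
  left_inv := by
    intro f
    apply Subtype.ext
    have hi := idx_le f
    have hs := idx_spec f
    funext j
    show comp0 (idx f) (p1 f.1 (idx f)) (p2 f.1 (idx f) (n - idx f)) j = f.1 j
    set i := idx f with hidef
    unfold comp0 p1 p2
    by_cases hj : j ≤ i
    · rw [if_pos hj]
      by_cases hj0 : j = 0
      · rw [if_pos hj0, hj0]
        have := f.2.2.1 0; omega
      · rw [if_neg hj0, if_pos (by omega)]
        have he : j - 1 + 1 = j := by omega
        rw [he]
    · rw [if_neg hj]
      by_cases hj2 : j - (i+1) < n - i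
      · rw [if_pos hj2]
        have he : j - (i+1) + i + 1 = j := by omega
        rw [he]
        have hm : f.1 (i+1) ≤ f.1 j := f.2.1 (by omega)
        omega
      · rw [if_neg hj2]
        have : f.1 j = j := f.2.2.2 j (by omega)
        omega
  right_inv := by
    intro x
    obtain ⟨⟨i, hi⟩, f1, f2⟩ := x
    have hidx : idx (compFun (⟨⟨i, hi⟩, f1, f2⟩ : Σ i : Fin (n+1), G i × G (n - i))) = i :=
      idx_comp _
    apply sigma_ext (Fin.ext (by simpa using hidx))
    · funext t
      show p1 (comp0 i f1.1 f2.1) (idx (compFun ⟨⟨i, hi⟩, f1, f2⟩)) t = f1.1 t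
      rw [hidx]
      unfold p1 comp0
      by_cases ht : t < i
      · rw [if_pos ht, if_pos (by omega), if_neg (by omega)]
        simp
      · rw [if_neg ht]
        exact (f1.2.2.2 t (by simpa using not_lt.1 ht)).symm
    · funext t
      show p2 (comp0 i f1.1 f2.1) (idx (compFun ⟨⟨i, hi⟩, f1, f2⟩)) (n - idx (compFun ⟨⟨i, hi⟩, f1, f2⟩)) t = f2.1 t
      rw [hidx]
      unfold p2 comp0
      by_cases ht : t < n - i
      · rw [if_pos ht, if_neg (by omega)]
        have he : t + i + 1 - (i+1) = t := by omega
        rw [he]; omega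
      · rw [if_neg ht]
        exact (f2.2.2.2 t (by simpa using not_lt.1 ht)).symm

theorem card_G (n : ℕ) : Nat.card (G n) = catalan n := by
  induction n using Nat.strong_induction_on with
  | _ n IH =>
    match n with
    | 0 =>
      rw [catalan_zero, Nat.card_eq_fintype_card, Fintype.card_eq_one_iff]
      refine ⟨⟨id, monotone_id, fun j => le_rfl, fun j _ => rfl⟩, fun g => ?_⟩
      exact Subtype.ext (funext fun j => g.2.2.2 j (Nat.zero_le _))
    | n+1 =>
      rw [Nat.card_eq_fintype_card, Fintype.card_congr (decompEquiv n), Fintype.card_sigma,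
        catalan_succ]
      refine Finset.sum_congr rfl fun i _ => ?_
      rw [Fintype.card_prod, ← Nat.card_eq_fintype_card, ← Nat.card_eq_fintype_card,
        IH i.1 i.isLt, IH (n - i.1) (by omega)]




open Finset in
/-- A downward-closed subset of `Fin n` is an initial segment. -/
lemma dc_mem_iff {n : ℕ} {S : Finset (Fin n)} (hdc : ∀ a b : Fin n, a < b → b ∈ S → a ∈ S)
    (i : Fin n) : i ∈ S ↔ i.val < S.card := by
  constructor
  · intro hi
    have hsub : Finset.Iic i ⊆ S := by
      intro a ha
      rcases lt_or_eq_of_le (Finset.mem_Iic.1 ha) with h | h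
      · exact hdc a i h hi
      · rwa [h]
    have := Finset.card_le_card hsub
    rw [Fin.card_Iic] at this
    omega
  · intro hi
    by_contra hni
    have hsub : S ⊆ Finset.Iio i := by
      intro s hs
      rw [Finset.mem_Iio]
      by_contra hsi
      rcases lt_or_eq_of_le (not_lt.1 hsi) with h | h
      · exact hni (hdc i s h hs)
      · exact hni (h ▸ hs)
    have := Finset.card_le_card hsub
    rw [Fin.card_Iio] at this
    omega

/-- The relation `R` induced by a staircase function. -/
def R0 {n : ℕ} (f : G n) (x y : Fin n) : Prop := (x : ℕ) < f.1 y
/-- The relation `T` induced by a staircase function. -/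
def T0 {n : ℕ} (f : G n) (x y : Fin n) : Prop := x < y ∧ ¬ (x : ℕ) < f.1 y

lemma R0_lt {n : ℕ} {f : G n} {x y : Fin n} (h : R0 f x y) : x < y := by
  have := f.2.2.1 (y : ℕ)
  exact Fin.lt_def.2 (by unfold R0 at h; omega)

lemma T0R0_union {n : ℕ} (f : G n) (x y : Fin n) : (T0 f x y ∨ R0 f x y) ↔ x < y := by
  constructor
  · rintro (⟨h, -⟩ | h)
    · exact h
    · exact R0_lt h
  · intro h
    by_cases hr : (x : ℕ) < f.1 y
    · exact Or.inr hr
    · exact Or.inl ⟨h, hr⟩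

lemma isC2Pair_mk {n : ℕ} (f : G n) : IsC2Pair (T0 f) (R0 f) := by
  have hle := f.2.2.1
  have hmono := f.2.1
  refine ⟨⟨fun x hx => ?_, fun x y z hxy hyz => ?_⟩, ⟨fun x hx => ?_, fun x y z hxy hyz => ?_⟩,
    fun x y hne => ?_, ?_, ?_⟩
  · unfold R0 at hx; have := hle (x : ℕ); omega
  · have h1 := R0_lt hxy
    have h2 := R0_lt hyz
    unfold R0 at *
    have : (y : ℕ) ≤ (z : ℕ) := le_of_lt h2
    calc (x : ℕ) < f.1 y := hxy
    _ ≤ (y : ℕ) := hle _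
    _ < f.1 z := hyz
  · exact absurd ((T0R0_union f x x).1 hx) (lt_irrefl x)
  · exact (T0R0_union f x z).2 (lt_trans ((T0R0_union f x y).1 hxy) ((T0R0_union f y z).1 hyz))
  · -- Xor'
    have key : ∀ a b : Fin n, a < b → Xor' (Cmp (T0 f) a b) (Cmp (R0 f) a b) := by
      intro a b hab
      have hnT : ¬ T0 f b a := fun h => absurd (lt_trans h.1 hab) (lt_irrefl b)
      have hnR : ¬ R0 f b a := fun h => absurd (lt_trans (R0_lt h) hab) (lt_irrefl b)
      by_cases hr : (a : ℕ) < f.1 b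
      · exact Or.inr ⟨Or.inl hr, fun hc => by
          rcases hc with h | h
          · exact h.2 hr
          · exact hnT h⟩
      · exact Or.inl ⟨Or.inl ⟨hab, hr⟩, fun hc => by
          rcases hc with h | h
          · exact hr h
          · exact hnR h⟩
    rcases lt_or_gt_of_ne hne with h | h
    · exact key x y h
    · have := key y x h
      unfold Xor' Cmp at this ⊢
      rwa [or_comm (a := T0 f x y), or_comm (a := R0 f x y)]
  · rintro ⟨x, y, z, hxy, hyz, hxz, hTxy, hTxz, hRyz⟩
    have h1 : (x : ℕ) < (y : ℕ) := hTxy.1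
    unfold R0 at hRyz
    exact hTxz.2 (by omega)
  · rintro ⟨x, y, z, hxy, hyz, hxz, hTyx, hTzx, hRyz⟩
    unfold R0 at hRyz
    have h1 : f.1 (z : ℕ) ≤ f.1 (x : ℕ) := hmono (le_of_lt hTzx.1)
    exact hTyx.2 (by omega)

/-- The canonical C2-pair attached to a staircase function. -/
def toC2 {n : ℕ} (f : G n) : C2PairsOn n := ⟨(T0 f, R0 f), isC2Pair_mk f⟩

lemma isoC2_equivalence (n : ℕ) : Equivalence (isoC2 (n := n)) := by
  refine ⟨fun p => ⟨Equiv.refl _, fun x y => by simp⟩, ?_, ?_⟩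
  · rintro p q ⟨E, hE⟩
    refine ⟨E.symm, fun x y => ?_⟩
    have := hE (E.symm x) (E.symm y)
    rw [E.apply_symm_apply, E.apply_symm_apply] at this
    exact ⟨(this.1).symm, (this.2).symm⟩
  · rintro p q r ⟨E, hE⟩ ⟨F, hF⟩
    exact ⟨E.trans F, fun x y => ⟨(hE x y).1.trans (hF (E x) (E y)).1,
      (hE x y).2.trans (hF (E x) (E y)).2⟩⟩

/-- The classifying map. -/
noncomputable def Phi (n : ℕ) (f : G n) : Quot (isoC2 (n := n)) := Quot.mk _ (toC2 f)

lemma Phi_injective (n : ℕ) : Function.Injective (Phi n) := by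
  intro f g h
  have h2 : isoC2 (toC2 f) (toC2 g) :=
    ((isoC2_equivalence n).eqvGen_iff).1 (Quot.eqvGen_exact h)
  obtain ⟨E, hE⟩ := h2
  -- E is strictly monotone
  have hmonoE : StrictMono E := by
    intro a b hab
    have h1 : T0 f a b ∨ R0 f a b := (T0R0_union f a b).2 hab
    have h2 : T0 g (E a) (E b) ∨ R0 g (E a) (E b) := by
      rcases h1 with h | h
      · exact Or.inl ((hE a b).1.1 h)
      · exact Or.inr ((hE a b).2.1 h)
    exact (T0R0_union g (E a) (E b)).1 h2
  have hid : (E : Fin n → Fin n) = id :=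
    (StrictMono.range_inj hmonoE strictMono_id).1
      (by rw [Set.range_id]; exact Set.range_eq_univ.2 E.surjective)
  have hEx : ∀ x : Fin n, E x = x := fun x => congrFun hid x
  -- now f = g
  apply Subtype.ext
  funext j
  by_cases hj : j < n
  · set jf : Fin n := ⟨j, hj⟩
    have hiff : ∀ x : Fin n, R0 f x jf ↔ R0 g x jf := by
      intro x
      have := (hE x jf).2
      rwa [hEx x, hEx jf] at this
    have hfle : f.1 j ≤ j := f.2.2.1 j
    have hgle : g.1 j ≤ j := g.2.2.1 j
    by_contra hne
    rcases Nat.lt_or_ge (f.1 j) (g.1 j) with hlt | hge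
    · have := (hiff ⟨f.1 j, by omega⟩).2 hlt
      unfold R0 at this
      simp at this
      exact lt_irrefl _ this
    · have hlt : g.1 j < f.1 j := by omega
      have := (hiff ⟨g.1 j, by omega⟩).1 hlt
      unfold R0 at this
      simp at this
      exact lt_irrefl _ this
  · rw [f.2.2.2 j (by omega), g.2.2.2 j (by omega)]


lemma Phi_surjective (n : ℕ) : Function.Surjective (Phi n) := by
  intro q
  induction q using Quot.ind with
  | _ p =>
    obtain ⟨⟨T, R⟩, hp⟩ := p
    obtain ⟨⟨hRirr, hRtrans⟩, ⟨hPirr, hPtrans⟩, hxor, hpat1, hpat2⟩ := hp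
    set P : Fin n → Fin n → Prop := fun x y => T x y ∨ R x y with hPdef
    have htot : ∀ x y : Fin n, x ≠ y → P x y ∨ P y x := by
      intro x y hne
      rcases hxor x y hne with ⟨hc, -⟩ | ⟨hc, -⟩
      · rcases hc with h | h
        · exact Or.inl (Or.inl h)
        · exact Or.inr (Or.inl h)
      · rcases hc with h | h
        · exact Or.inl (Or.inr h)
        · exact Or.inr (Or.inr h)
    have hasymm : ∀ {x y : Fin n}, P x y → ¬ P y x := fun {x y} h h' =>
      hPirr x (hPtrans h h')
    -- the rank function
    have hcardlt : ∀ x : Fin n, (Finset.univ.filter fun z => P z x).card < n := by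
      intro x
      have hss : (Finset.univ.filter fun z => P z x) ⊂ Finset.univ :=
        (Finset.ssubset_iff_of_subset (Finset.subset_univ _)).2
          ⟨x, Finset.mem_univ x, by simp [hPirr x]⟩
      have := Finset.card_lt_card hss
      simpa using this
    set rank : Fin n → Fin n := fun x => ⟨_, hcardlt x⟩ with hrankdef
    have hrank_lt : ∀ {x y : Fin n}, P x y → rank x < rank y := by
      intro x y h
      have hsub : (Finset.univ.filter fun z => P z x) ⊆ (Finset.univ.filter fun z => P z y) := by
        intro z hz
        simp only [Finset.mem_filter, Finset.mem_univ, true_and] at hz ⊢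
        exact hPtrans hz h
      have hss : (Finset.univ.filter fun z => P z x) ⊂ (Finset.univ.filter fun z => P z y) :=
        (Finset.ssubset_iff_of_subset hsub).2
          ⟨x, by simp [h], by simp [hPirr x]⟩
      exact Finset.card_lt_card hss
    have hrank_inj : Function.Injective rank := by
      intro x y hxy
      by_contra hne
      rcases htot x y hne with h | h
      · exact absurd hxy (ne_of_lt (hrank_lt h))
      · exact absurd hxy.symm (ne_of_lt (hrank_lt h))
    set E : Fin n ≃ Fin n := Equiv.ofBijective rank (Finite.injective_iff_bijective.1 hrank_inj)
      with hEdef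
    have hEapp : ∀ x, E x = rank x := fun x => rfl
    have hP_iff : ∀ x y : Fin n, P x y ↔ E x < E y := by
      intro x y
      rw [hEapp, hEapp]
      constructor
      · exact hrank_lt
      · intro h
        have hne : x ≠ y := fun he => absurd (he ▸ h) (lt_irrefl _)
        rcases htot x y hne with h' | h'
        · exact h'
        · exact absurd h (not_lt.2 (le_of_lt (hrank_lt h')))
    -- normalized relations
    set T' : Fin n → Fin n → Prop := fun a b => T (E.symm a) (E.symm b) with hT'def
    set R' : Fin n → Fin n → Prop := fun a b => R (E.symm a) (E.symm b) with hR'def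
    have hunion : ∀ a b : Fin n, (T' a b ∨ R' a b) ↔ a < b := by
      intro a b
      have := hP_iff (E.symm a) (E.symm b)
      rw [E.apply_symm_apply, E.apply_symm_apply] at this
      exact this
    have hR'lt : ∀ {a b : Fin n}, R' a b → a < b := fun {a b} h =>
      (hunion a b).1 (Or.inr h)
    have hT'lt : ∀ {a b : Fin n}, T' a b → a < b := fun {a b} h =>
      (hunion a b).1 (Or.inl h)
    have hxor' : ∀ a b : Fin n, a < b → (T' a b ↔ ¬ R' a b) := by
      intro a b hab
      have hne : E.symm a ≠ E.symm b := fun h =>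
        absurd (E.symm.injective h) (Fin.ne_of_lt hab)
      have hx := hxor (E.symm a) (E.symm b) hne
      have hnTba : ¬ T' b a := fun h => absurd (lt_trans (hT'lt h) hab) (lt_irrefl b)
      have hnRba : ¬ R' b a := fun h => absurd (lt_trans (hR'lt h) hab) (lt_irrefl b)
      have hcmpT : Cmp T (E.symm a) (E.symm b) ↔ T' a b := by
        unfold Cmp
        exact ⟨fun h => h.elim id fun h => absurd h hnTba, Or.inl⟩
      have hcmpR : Cmp R (E.symm a) (E.symm b) ↔ R' a b := by
        unfold Cmp
        exact ⟨fun h => h.elim id fun h => absurd h hnRba, Or.inl⟩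
      rw [hcmpT, hcmpR] at hx
      rcases hx with ⟨h1, h2⟩ | ⟨h1, h2⟩
      · exact ⟨fun _ => h2, fun _ => h1⟩
      · exact ⟨fun h => absurd h h2, fun h => absurd h1 h⟩
    have hne3 : ∀ {a b : Fin n}, a < b → E.symm a ≠ E.symm b := fun {a b} hab h =>
      absurd (E.symm.injective h) (Fin.ne_of_lt hab)
    -- downward closure
    have hdc : ∀ a' a b : Fin n, a' < a → R' a b → R' a' b := by
      intro a' a b h1 h2
      have hab : a < b := hR'lt h2
      have h1b : a' < b := lt_trans h1 hab
      by_contra hnR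
      have hT1 : T' a' b := (hxor' a' b h1b).2 hnR
      have hT2 : T' a' a := by
        rw [hxor' a' a h1]
        intro hR2
        exact hnR (hRtrans hR2 h2)
      exact hpat1 ⟨E.symm a', E.symm a, E.symm b, hne3 h1, hne3 hab, hne3 h1b, hT2, hT1, h2⟩
    -- upward closure
    have huc : ∀ a b b' : Fin n, R' a b → b < b' → R' a b' := by
      intro a b b' h2 h1
      have hab : a < b := hR'lt h2
      have h1b : a < b' := lt_trans hab h1
      by_contra hnR
      have hT1 : T' a b' := (hxor' a b' h1b).2 hnR
      have hT2 : T' b b' := by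
        rw [hxor' b b' h1]
        intro hR2
        exact hnR (hRtrans h2 hR2)
      exact hpat2 ⟨E.symm b', E.symm a, E.symm b, (hne3 h1b).symm, hne3 hab,
        (hne3 h1).symm, hT1, hT2, h2⟩
    -- the staircase function
    set Sf : Fin n → Finset (Fin n) := fun b => Finset.univ.filter fun i => R' i b with hSfdef
    have hSmem : ∀ (b i : Fin n), i ∈ Sf b ↔ (i : ℕ) < (Sf b).card := by
      intro b i
      apply dc_mem_iff
      intro x y hxy hy
      simp only [hSfdef, Finset.mem_filter, Finset.mem_univ, true_and] at hy ⊢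
      exact hdc x y b hxy hy
    set f : ℕ → ℕ := fun j => if h : j < n then (Sf ⟨j, h⟩).card else j with hfdef
    have hfle : ∀ j, f j ≤ j := by
      intro j
      by_cases hj : j < n
      · simp only [hfdef, dif_pos hj]
        have hsub : Sf ⟨j, hj⟩ ⊆ Finset.Iio ⟨j, hj⟩ := by
          intro s hs
          simp only [hSfdef, Finset.mem_filter, Finset.mem_univ, true_and] at hs
          exact Finset.mem_Iio.2 (hR'lt hs)
        have := Finset.card_le_card hsub
        rw [Fin.card_Iio] at this
        exact this
      · simp [hfdef, dif_neg hj]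
    have hcard_mono : ∀ (b b' : Fin n), b ≤ b' → (Sf b).card ≤ (Sf b').card := by
      intro b b' hbb
      apply Finset.card_le_card
      intro s hs
      simp only [hSfdef, Finset.mem_filter, Finset.mem_univ, true_and] at hs ⊢
      rcases lt_or_eq_of_le hbb with h | h
      · exact huc s b b' hs h
      · rwa [← h]
    have hfmono : Monotone f := by
      intro j j' hjj
      by_cases hj : j < n
      · by_cases hj' : j' < n
        · simp only [hfdef, dif_pos hj, dif_pos hj']
          exact hcard_mono _ _ hjj
        · simp only [hfdef, dif_pos hj, dif_neg hj']
          have := hfle j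
          simp only [hfdef, dif_pos hj] at this
          omega
      · have hj2 : ¬ j' < n := by omega
        simp only [hfdef, dif_neg hj, dif_neg hj2]
        exact hjj
    set fG : G n := ⟨f, hfmono, hfle, fun j hj => by simp [hfdef, dif_neg (not_lt.2 hj)]⟩
      with hfGdef
    -- the relations agree
    have hRagree : ∀ a b : Fin n, R' a b ↔ R0 fG a b := by
      intro a b
      have h1 : a ∈ Sf b ↔ (a : ℕ) < (Sf b).card := hSmem b a
      have h2 : a ∈ Sf b ↔ R' a b := by
        simp [hSfdef]
      have h3 : R0 fG a b ↔ (a : ℕ) < (Sf b).card := by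
        unfold R0
        have : fG.1 (b : ℕ) = (Sf b).card := by
          simp only [hfGdef, hfdef, dif_pos b.isLt]
        rw [this]
      rw [h3, ← h1, h2]
    have hTagree : ∀ a b : Fin n, T' a b ↔ T0 fG a b := by
      intro a b
      constructor
      · intro h
        have hab : a < b := hT'lt h
        refine ⟨hab, ?_⟩
        have := (hxor' a b hab).1 h
        rw [hRagree a b] at this
        exact this
      · rintro ⟨hab, hnr⟩
        apply (hxor' a b hab).2
        rw [hRagree a b]
        exact hnr
    -- conclude
    refine ⟨fG, ?_⟩
    apply Quot.sound
    refine ⟨E.symm, fun x y => ?_⟩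
    constructor
    · show T0 fG x y ↔ T (E.symm x) (E.symm y)
      exact ((hTagree x y).symm : T0 fG x y ↔ T' x y)
    · show R0 fG x y ↔ R (E.symm x) (E.symm y)
      exact ((hRagree x y).symm : R0 fG x y ↔ R' x y)



/-- C2-pairs on an `n`-element set are counted, up to isomorphism, by the Catalan number
`C_n = binom(2n, n) / (n+1)`. -/
theorem stmt_5 (n : ℕ) :
    Nonempty (Quot (isoC2 (n := n)) ≃ Fin (Nat.choose (2 * n) n / (n + 1))) := by
  have hbij : Function.Bijective (Phi n) := ⟨Phi_injective n, Phi_surjective n⟩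
  have e1 : G n ≃ Quot (isoC2 (n := n)) := Equiv.ofBijective _ hbij
  have hfc : Fintype.card (G n) = Nat.choose (2 * n) n / (n + 1) := by
    rw [← Nat.card_eq_fintype_card, card_G, catalan_eq_centralBinom_div]
    rfl
  exact ⟨e1.symm.trans (Fintype.equivFinOfCardEq hfc)⟩

end FishburnPaper
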